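/- arXiv:2307.15283 — 3 statements merged into one kernel-verified Lean document; each statement's English description precedes it below -/
import Mathlib

section
/- Let F : ℝⁿ → ℝᵐ satisfy the local tangential cone condition with constant η ∈ [0, 1/2), and suppose x⋆ ∈ ℝⁿ satisfies F(x⋆) = 0. Let I ⊆ {1,…,m} be a nonempty index subset, let x_k ∈ ℝⁿ be such that F'_I(x_k) has full column rank, let α ∈ [1, 2(1−η)), and define x_{k+1} = x_k − α (F'_I(x_k))ᵀ F_I(x_k) / ‖F'_I(x_k)‖₂². Then ‖x_{k+1} − x⋆‖₂² ≤ (1 − (2(1−η)α − α²) / ((1+η²) κ_F²(F'_I(x_k)))) ‖x_k − x⋆‖₂², where κ_F(A) = ‖A‖_F / σ_min(A). -/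
open Matrix

/-- The singular values of a real matrix `A`: square roots of the eigenvalues of `AᵀA`. -/
noncomputable def singVals {m' : Type*} [Fintype m'] {n : ℕ}
    (A : Matrix m' (Fin n) ℝ) : Fin n → ℝ :=
  fun j => Real.sqrt ((Matrix.isHermitian_conjTranspose_mul_self A).eigenvalues j)

/-- The largest singular value of `A`, i.e. its spectral norm `‖A‖₂`. -/
noncomputable def sigmaMax {m' : Type*} [Fintype m'] {n : ℕ}
    (A : Matrix m' (Fin n) ℝ) : ℝ :=
  ⨆ j, singVals A j

/-- The smallest singular value of `A`. -/
noncomputable def sigmaMin {m' : Type*} [Fintype m'] {n : ℕ}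
    (A : Matrix m' (Fin n) ℝ) : ℝ :=
  ⨅ j, singVals A j

/-- The Frobenius norm of `A`. -/
noncomputable def frobNorm {m' : Type*} [Fintype m'] {n : ℕ}
    (A : Matrix m' (Fin n) ℝ) : ℝ :=
  Real.sqrt (∑ i, ∑ j, (A i j) ^ 2)

/-- The scaled condition number `κ_F(A) = ‖A‖_F / σ_min(A)`. -/
noncomputable def kappaF {m' : Type*} [Fintype m'] {n : ℕ}
    (A : Matrix m' (Fin n) ℝ) : ℝ :=
  frobNorm A / sigmaMin A


lemma abnk_ptwise {η α r a : ℝ} (hη0 : 0 ≤ η) (hα1 : 1 ≤ α)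
    (hα2 : α < 2*(1-η)) (h : |r - a| ≤ η * |r|) :
    (2*(1-η)*α - α^2) * a^2 ≤ (1+η^2) * (2*α*(r*a) - α^2*r^2) := by
  have hφ : 0 ≤ 2*(1-η)*α - α^2 := by nlinarith
  have hK : (r-a)^2 ≤ η^2 * r^2 := by
    have h2 := pow_le_pow_left₀ (abs_nonneg (r - a)) h 2
    rw [sq_abs, mul_pow] at h2
    rw [sq_abs] at h2
    exact h2
  have h2 : (1-η) * r^2 ≤ r * a := by
    have hra : r * (r - a) ≤ η * r^2 := by
      calc r * (r - a) ≤ |r * (r - a)| := le_abs_self _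
      _ = |r| * |r - a| := abs_mul _ _
      _ ≤ |r| * (η * |r|) := mul_le_mul_of_nonneg_left h (abs_nonneg r)
      _ = η * (|r|^2) := by ring
      _ = η * r^2 := by rw [sq_abs]
    nlinarith
  have hC : 0 ≤ 2*α*(α + η^2 + 2*η - 1) := by nlinarith
  nlinarith [mul_nonneg hφ (sub_nonneg.2 hK), mul_nonneg hC (sub_nonneg.2 h2),
    mul_nonneg (mul_nonneg hη0 hφ) (sq_nonneg r)]

lemma abnk_quad_bounds {m' : Type*} [Fintype m'] {n : ℕ}
    (A : Matrix m' (Fin n) ℝ) (x : Fin n → ℝ) (c C : ℝ)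
    (hc : ∀ j, c ≤ (Matrix.isHermitian_conjTranspose_mul_self A).eigenvalues j)
    (hC : ∀ j, (Matrix.isHermitian_conjTranspose_mul_self A).eigenvalues j ≤ C) :
    c * (∑ j, (x j)^2) ≤ x ⬝ᵥ ((Aᴴ * A) *ᵥ x)
      ∧ x ⬝ᵥ ((Aᴴ * A) *ᵥ x) ≤ C * (∑ j, (x j)^2) := by
  classical
  set hM := Matrix.isHermitian_conjTranspose_mul_self A with hhM
  set M := Aᴴ * A with hMdef
  set b := hM.eigenvectorBasis with hb
  set μ := hM.eigenvalues with hμ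
  set bv : Fin n → Fin n → ℝ := fun j => (WithLp.equiv 2 _) (b j) with hbv
  have hMsymm : Mᵀ = M := by
    rw [← Matrix.conjTranspose_eq_transpose_of_trivial]; exact hM
  set y : EuclideanSpace ℝ (Fin n) := WithLp.toLp 2 x with hy
  set w : EuclideanSpace ℝ (Fin n) := WithLp.toLp 2 (M *ᵥ x) with hw
  have hyx : (y : Fin n → ℝ) = x := rfl
  have hrepr : ∀ (v : EuclideanSpace ℝ (Fin n)) j,
      b.repr v j = bv j ⬝ᵥ (v : Fin n → ℝ) := by
    intro v j
    rw [b.repr_apply_apply]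
    simp only [PiLp.inner_apply, RCLike.inner_apply, conj_trivial]
    exact Finset.sum_congr rfl fun t _ => mul_comm _ _
  have e1 : ∀ j t, (M *ᵥ bv j) t = μ j * bv j t := by
    intro j t
    have h := congrFun (hM.mulVec_eigenvectorBasis j) t
    simp only [Pi.smul_apply, smul_eq_mul] at h
    exact h
  have key : ∀ j, bv j ⬝ᵥ (M *ᵥ x) = μ j * (bv j ⬝ᵥ x) := by
    intro j
    rw [Matrix.dotProduct_mulVec]
    have h3 : bv j ᵥ* M = M *ᵥ bv j := by
      nth_rewrite 1 [← hMsymm]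
      exact Matrix.vecMul_transpose M (bv j)
    rw [h3]
    simp only [dotProduct, e1, Finset.mul_sum, mul_assoc]
  have h1 : x ⬝ᵥ (M *ᵥ x) = (inner ℝ y w : ℝ) := by
    simp only [PiLp.inner_apply, RCLike.inner_apply, conj_trivial]
    rw [dotProduct]
    exact Finset.sum_congr rfl fun t _ => mul_comm _ _
  have h2 : (inner ℝ y w : ℝ) = ∑ j, (b.repr y j) * (b.repr w j) := by
    calc (inner ℝ y w : ℝ) = inner ℝ (b.repr y) (b.repr w) := (b.repr.inner_map_map y w).symm
    _ = ∑ j, (b.repr y j) * (b.repr w j) := by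
        simp only [PiLp.inner_apply, RCLike.inner_apply, conj_trivial]
        exact Finset.sum_congr rfl fun t _ => mul_comm _ _
  have hquad : x ⬝ᵥ (M *ᵥ x) = ∑ j, μ j * (bv j ⬝ᵥ x)^2 := by
    rw [h1, h2]
    refine Finset.sum_congr rfl fun j _ => ?_
    rw [hrepr y j, hrepr w j]
    have : (w : Fin n → ℝ) = M *ᵥ x := rfl
    rw [this, hyx, key j]
    ring
  have h4 : (inner ℝ y y : ℝ) = ∑ j, (b.repr y j) * (b.repr y j) := by
    calc (inner ℝ y y : ℝ) = inner ℝ (b.repr y) (b.repr y) := (b.repr.inner_map_map y y).symm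
    _ = ∑ j, (b.repr y j) * (b.repr y j) := by
        simp only [PiLp.inner_apply, RCLike.inner_apply, conj_trivial]
  have hsq : ∑ j, (x j)^2 = ∑ j, (bv j ⬝ᵥ x)^2 := by
    have h5 : (inner ℝ y y : ℝ) = ∑ j, (x j)^2 := by
      simp only [PiLp.inner_apply, RCLike.inner_apply, conj_trivial]
      rw [hyx]
      exact Finset.sum_congr rfl fun j _ => (sq (x j)).symm ▸ by ring
    rw [← h5, h4]
    exact Finset.sum_congr rfl fun j _ => by rw [hrepr y j, hyx]; ring
  constructor
  · rw [hquad, hsq, Finset.mul_sum]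
    exact Finset.sum_le_sum fun j _ => mul_le_mul_of_nonneg_right (hc j) (sq_nonneg _)
  · rw [hquad, hsq, Finset.mul_sum]
    exact Finset.sum_le_sum fun j _ => mul_le_mul_of_nonneg_right (hC j) (sq_nonneg _)

lemma abnk_eig_pos {m' : Type*} [Fintype m'] {n : ℕ}
    (A : Matrix m' (Fin n) ℝ) (hrank : A.rank = n) (j : Fin n) :
    0 < (Matrix.isHermitian_conjTranspose_mul_self A).eigenvalues j := by
  classical
  have hker : ∀ x : Fin n → ℝ, A *ᵥ x = 0 → x = 0 := by
    intro x hx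
    have h5 := LinearMap.finrank_range_add_finrank_ker (A.mulVecLin)
    rw [Module.finrank_fin_fun] at h5
    have h6 : Module.finrank ℝ (LinearMap.range A.mulVecLin) = n := hrank
    have h7 : Module.finrank ℝ (LinearMap.ker A.mulVecLin) = 0 := by omega
    have h8 : LinearMap.ker A.mulVecLin = ⊥ := Submodule.finrank_eq_zero.mp h7
    have hx' : x ∈ LinearMap.ker A.mulVecLin := by
      simpa [LinearMap.mem_ker, Matrix.mulVecLin_apply] using hx
    rw [h8] at hx'
    simpa using hx'
  have hpd : (Aᴴ * A).PosDef := by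
    refine Matrix.PosDef.of_dotProduct_mulVec_pos (Matrix.isHermitian_conjTranspose_mul_self A) fun x hx => ?_
    rw [← Matrix.mulVec_mulVec, Matrix.dotProduct_mulVec, Matrix.vecMul_conjTranspose,
      star_star]
    have hAx : A *ᵥ x ≠ 0 := fun h0 => hx (hker x h0)
    have hnn : 0 ≤ star (A *ᵥ x) ⬝ᵥ (A *ᵥ x) := by
      apply Finset.sum_nonneg
      intro i _
      simpa using mul_self_nonneg ((A *ᵥ x) i)
    rcases hnn.lt_or_eq with h | h
    · exact h
    · exfalso
      apply hAx
      have : (A *ᵥ x) ⬝ᵥ (A *ᵥ x) = 0 := by simpa using h.symm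
      exact dotProduct_self_eq_zero.mp this
  exact hpd.eigenvalues_pos j

lemma abnk_sum_eig {n : ℕ} (N : Matrix (Fin n) (Fin n) ℝ) (hN : N.IsHermitian) :
    ∑ j, hN.eigenvalues j = Matrix.trace N := by
  classical
  rw [hN.trace_eq_sum_eigenvalues]
  simp

set_option maxHeartbeats 1000000 in
/-- Theorem 3: one step of the averaging block nonlinear Kaczmarz method
with constant stepsize `α ∈ [1, 2(1−η))` satisfies
`‖x_{k+1} − x⋆‖₂² ≤ (1 − (2(1−η)α − α²)/((1+η²) κ_F²(F'_I(x_k)))) ‖x_k − x⋆‖₂²`. -/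
theorem abnk_constant_stepsize_convergence_factor
    {n m : ℕ}
    (F : Fin m → EuclideanSpace ℝ (Fin n) → ℝ)
    (grad : Fin m → EuclideanSpace ℝ (Fin n) → EuclideanSpace ℝ (Fin n))
    (η : ℝ) (hη0 : 0 ≤ η) (hη : η < 1 / 2)
    -- F is differentiable with Jacobian whose i-th row is ∇F_i
    (hdiff : ∀ i x, HasGradientAt (F i) (grad i x) x)
    -- local tangential cone condition with constant η
    (hltcc : ∀ i (x₁ x₂ : EuclideanSpace ℝ (Fin n)),
      |F i x₁ - F i x₂ - ∑ j, grad i x₁ j * (x₁ j - x₂ j)| ≤ η * |F i x₁ - F i x₂|)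
    (xstar : EuclideanSpace ℝ (Fin n)) (hstar : ∀ i, F i xstar = 0)
    (S : Finset (Fin m)) (hS : S.Nonempty)
    (xk : EuclideanSpace ℝ (Fin n))
    -- the row-submatrix F'_I(x_k) of the Jacobian
    (J : Matrix {i // i ∈ S} (Fin n) ℝ)
    (hJdef : J = Matrix.of fun (i : {i // i ∈ S}) (j : Fin n) => grad i.1 xk j)
    -- F'_I(x_k) has full column rank
    (hrank : J.rank = n)
    (α : ℝ) (hα1 : 1 ≤ α) (hα2 : α < 2 * (1 - η))
    (xk1 : EuclideanSpace ℝ (Fin n))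
    -- x_{k+1} = x_k − α (F'_I(x_k))ᵀ F_I(x_k) / ‖F'_I(x_k)‖₂²
    (hupd : xk1 = xk - (α / sigmaMax J ^ 2) • ∑ i ∈ S, F i xk • grad i xk) :
    ‖xk1 - xstar‖ ^ 2
      ≤ (1 - (2 * (1 - η) * α - α ^ 2) / ((1 + η ^ 2) * kappaF J ^ 2))
          * ‖xk - xstar‖ ^ 2 := by
  classical
  have hnorm : ∀ z : EuclideanSpace ℝ (Fin n), ‖z‖^2 = ∑ t, (z t)^2 := by
    intro z
    rw [EuclideanSpace.norm_eq, Real.sq_sqrt (Finset.sum_nonneg fun t _ => sq_nonneg _)]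
    exact Finset.sum_congr rfl fun t _ => by rw [Real.norm_eq_abs, sq_abs]
  rcases Nat.eq_zero_or_pos n with hn | hn
  · subst hn
    have h1 : ‖xk1 - xstar‖^2 = 0 := by rw [hnorm]; simp
    have h2 : ‖xk - xstar‖^2 = 0 := by rw [hnorm]; simp
    rw [h1, h2, mul_zero]
  have hne : Nonempty (Fin n) := ⟨⟨0, hn⟩⟩
  have hμpos : ∀ j, 0 < (Matrix.isHermitian_conjTranspose_mul_self J).eigenvalues j :=
    abnk_eig_pos J hrank
  set μ := (Matrix.isHermitian_conjTranspose_mul_self J).eigenvalues with hμdef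
  obtain ⟨j₀, hj₀⟩ := Finite.exists_max (singVals J)
  obtain ⟨j₁, hj₁⟩ := Finite.exists_min (singVals J)
  have hσ_eq : sigmaMax J = singVals J j₀ :=
    le_antisymm (ciSup_le hj₀) (le_ciSup (Set.Finite.bddAbove (Set.finite_range _)) j₀)
  have hs_eq : sigmaMin J = singVals J j₁ :=
    le_antisymm (ciInf_le (Set.Finite.bddBelow (Set.finite_range _)) j₁) (le_ciInf hj₁)
  have hσpos : 0 < sigmaMax J := by
    rw [hσ_eq]; exact Real.sqrt_pos.mpr (hμpos j₀)
  have hspos : 0 < sigmaMin J := by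
    rw [hs_eq]; exact Real.sqrt_pos.mpr (hμpos j₁)
  have hσsq : sigmaMax J ^ 2 = μ j₀ := by
    rw [hσ_eq]; exact Real.sq_sqrt (hμpos j₀).le
  have hssq : sigmaMin J ^ 2 = μ j₁ := by
    rw [hs_eq]; exact Real.sq_sqrt (hμpos j₁).le
  have hsv : ∀ j, singVals J j = Real.sqrt (μ j) := fun j => rfl
  have hμ_le : ∀ j, μ j ≤ sigmaMax J ^ 2 := by
    intro j
    rw [hσsq]
    have h := pow_le_pow_left₀ (Real.sqrt_nonneg (μ j)) (hj₀ j) 2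
    rw [hsv j₀] at h
    rwa [Real.sq_sqrt (hμpos j).le, Real.sq_sqrt (hμpos j₀).le] at h
  have hμ_ge : ∀ j, sigmaMin J ^ 2 ≤ μ j := by
    intro j
    rw [hssq]
    have h := pow_le_pow_left₀ (Real.sqrt_nonneg (μ j₁)) (hj₁ j) 2
    rw [hsv j] at h
    rwa [Real.sq_sqrt (hμpos j₁).le, Real.sq_sqrt (hμpos j).le] at h
  have hfrob_sq : frobNorm J ^ 2 = ∑ j, μ j := by
    rw [frobNorm, Real.sq_sqrt (by positivity)]
    rw [hμdef, abnk_sum_eig _ (Matrix.isHermitian_conjTranspose_mul_self J)]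
    rw [Matrix.trace]
    rw [Finset.sum_comm]
    exact Finset.sum_congr rfl fun j _ => by
      simp [Matrix.diag, Matrix.mul_apply, Matrix.conjTranspose_apply, sq]
  have hσ_le_f : sigmaMax J ^ 2 ≤ frobNorm J ^ 2 := by
    rw [hσsq, hfrob_sq]
    exact Finset.single_le_sum (fun j _ => (hμpos j).le) (Finset.mem_univ j₀)
  have hfpos : 0 < frobNorm J := by
    have hf0 : 0 ≤ frobNorm J := Real.sqrt_nonneg _
    rcases hf0.lt_or_eq with h | h
    · exact h
    · exfalso; rw [← h] at hσ_le_f; nlinarith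
  -- componentwise setup
  have hJ : ∀ (i : {i // i ∈ S}) (t : Fin n), J i t = grad i.1 xk t := by
    intro i t; rw [hJdef]; rfl
  set e : Fin n → ℝ := fun t => xk t - xstar t with he
  set r : {i // i ∈ S} → ℝ := fun i => F i.1 xk with hrdef
  set a : {i // i ∈ S} → ℝ := fun i => ∑ t, J i t * e t with hadef
  set v : Fin n → ℝ := fun t => ∑ i : {i // i ∈ S}, r i * J i t with hvdef
  have htcc : ∀ i : {i // i ∈ S}, |r i - a i| ≤ η * |r i| := by
    intro i
    have h := hltcc i.1 xk xstar
    rw [hstar i.1, sub_zero] at h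
    have ha' : (∑ j, grad i.1 xk j * (xk j - xstar j)) = a i := by
      simp only [hadef]
      exact Finset.sum_congr rfl fun t _ => by rw [hJ i t]
    rw [ha'] at h
    exact h
  set τ := α / sigmaMax J ^ 2 with hτdef
  have hupd' : ∀ t, xk1 t - xstar t = e t - τ * v t := by
    intro t
    have h1 : xk1 t = xk t - τ * ((∑ i ∈ S, F i xk • grad i xk :
        EuclideanSpace ℝ (Fin n)) t) := by
      rw [hupd]; rfl
    have h2 : ((∑ i ∈ S, F i xk • grad i xk : EuclideanSpace ℝ (Fin n))) t
        = ∑ i ∈ S, F i xk * grad i xk t := by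
      rw [WithLp.ofLp_sum, Finset.sum_apply]
      rfl
    have h3 : ∑ i ∈ S, F i xk * grad i xk t = v t := by
      simp only [hvdef]
      rw [← Finset.sum_coe_sort S (fun i => F i xk * grad i xk t)]
      exact Finset.sum_congr rfl fun i _ => by rw [hJ i t]
    rw [h1, h2, h3]
    ring
  set E := ∑ t, e t^2 with hEdef
  set R := ∑ i : {i // i ∈ S}, r i^2 with hRdef
  set P := ∑ i : {i // i ∈ S}, r i * a i with hPdef
  set A2 := ∑ i : {i // i ∈ S}, a i^2 with hA2def
  set V := ∑ t, v t^2 with hVdef2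
  have hEnn : 0 ≤ E := Finset.sum_nonneg fun t _ => sq_nonneg _
  have hRnn : 0 ≤ R := Finset.sum_nonneg fun i _ => sq_nonneg _
  have hVnn : 0 ≤ V := Finset.sum_nonneg fun t _ => sq_nonneg _
  have hLHS : ‖xk1 - xstar‖^2 = ∑ t, (e t - τ * v t)^2 := by
    rw [hnorm]
    refine Finset.sum_congr rfl fun t _ => ?_
    have h0 : (xk1 - xstar) t = xk1 t - xstar t := rfl
    rw [h0, hupd' t]
  have hE : ‖xk - xstar‖^2 = E := by
    rw [hnorm, hEdef]
    rfl
  have hev : ∑ t, v t * e t = P := by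
    calc ∑ t, v t * e t = ∑ t, ∑ i : {i // i ∈ S}, r i * J i t * e t := by
          refine Finset.sum_congr rfl fun t _ => ?_
          simp only [hvdef]
          rw [Finset.sum_mul]
    _ = ∑ i : {i // i ∈ S}, ∑ t, r i * J i t * e t := Finset.sum_comm
    _ = P := by
          refine Finset.sum_congr rfl fun i _ => ?_
          simp only [hadef]
          rw [Finset.mul_sum]
          exact Finset.sum_congr rfl fun t _ => by ring
  have hexp : ∑ t, (e t - τ * v t)^2 = E - 2*τ*P + τ^2*V := by
    have h1 : ∀ t ∈ Finset.univ, (e t - τ*v t)^2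
        = e t^2 - 2*τ*(v t * e t) + τ^2 * v t^2 := fun t _ => by ring
    rw [Finset.sum_congr rfl h1, Finset.sum_add_distrib, Finset.sum_sub_distrib,
      ← Finset.mul_sum, ← Finset.mul_sum, hev]
  -- matrix quadratic bounds
  have hdot : ∀ x : Fin n → ℝ, x ⬝ᵥ ((Jᴴ * J) *ᵥ x) = ∑ i : {i // i ∈ S}, ((J *ᵥ x) i)^2 := by
    intro x
    rw [← Matrix.mulVec_mulVec, Matrix.dotProduct_mulVec, Matrix.vecMul_conjTranspose]
    simp [dotProduct, sq]
  have hA2E : sigmaMin J^2 * E ≤ A2 := by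
    have h1 := (abnk_quad_bounds J e (sigmaMin J^2) (sigmaMax J^2) hμ_ge hμ_le).1
    rw [hdot e] at h1
    have h2 : ∑ i : {i // i ∈ S}, ((J *ᵥ e) i)^2 = A2 := by
      refine Finset.sum_congr rfl fun i _ => ?_
      simp only [hadef]
      rfl
    rw [h2] at h1
    exact h1
  have hVle : V ≤ sigmaMax J^2 * R := by
    have hquadV := (abnk_quad_bounds J v (sigmaMin J^2) (sigmaMax J^2) hμ_ge hμ_le).2
    rw [hdot v] at hquadV
    have hVdot : ∑ i : {i // i ∈ S}, r i * (J *ᵥ v) i = V := by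
      calc ∑ i : {i // i ∈ S}, r i * (J *ᵥ v) i
          = ∑ i : {i // i ∈ S}, ∑ t, r i * J i t * v t := by
            refine Finset.sum_congr rfl fun i _ => ?_
            have : (J *ᵥ v) i = ∑ t, J i t * v t := rfl
            rw [this, Finset.mul_sum]
            exact Finset.sum_congr rfl fun t _ => by ring
      _ = ∑ t, ∑ i : {i // i ∈ S}, r i * J i t * v t := Finset.sum_comm
      _ = ∑ t, v t * v t := by
            refine Finset.sum_congr rfl fun t _ => ?_
            conv_rhs => rw [hvdef]
            rw [Finset.sum_mul]
      _ = V := by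
            simp only [hVdef2]
            exact Finset.sum_congr rfl fun t _ => (sq (v t)).symm
    have hcs := Finset.sum_mul_sq_le_sq_mul_sq Finset.univ r (fun i => (J *ᵥ v) i)
    rw [hVdot] at hcs
    -- hcs : V^2 ≤ R * ∑ ((J*ᵥv) i)^2 ≤ R * (σ² * V)
    have h4 : V^2 ≤ R * (sigmaMax J^2 * V) :=
      hcs.trans (mul_le_mul_of_nonneg_left hquadV hRnn)
    rcases hVnn.lt_or_eq with hV0 | hV0
    · have := le_of_mul_le_mul_right (by nlinarith [h4] : V * V ≤ (sigmaMax J^2 * R) * V) hV0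
      exact this
    · rw [← hV0]
      positivity
  have hPt : (2*(1-η)*α - α^2) * A2 ≤ (1+η^2) * (2*α*P - α^2*R) := by
    have hsum : ∑ i : {i // i ∈ S}, (2*(1-η)*α - α^2) * (a i)^2
        ≤ ∑ i : {i // i ∈ S}, (1+η^2) * (2*α*(r i * a i) - α^2*(r i)^2) :=
      Finset.sum_le_sum (fun i _ => abnk_ptwise hη0 hα1 hα2 (htcc i))
    calc (2*(1-η)*α - α^2) * A2
        = ∑ i : {i // i ∈ S}, (2*(1-η)*α - α^2) * (a i)^2 := by
          rw [hA2def, Finset.mul_sum]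
    _ ≤ ∑ i : {i // i ∈ S}, (1+η^2) * (2*α*(r i * a i) - α^2*(r i)^2) := hsum
    _ = (1+η^2) * (2*α*P - α^2*R) := by
          rw [← Finset.mul_sum, Finset.sum_sub_distrib, ← Finset.mul_sum, ← Finset.mul_sum,
            hPdef, hRdef]
  have hφ : 0 ≤ 2*(1-η)*α - α^2 := by nlinarith
  have hη2 : (0:ℝ) < 1 + η^2 := by positivity
  have hσ2 : (0:ℝ) < sigmaMax J^2 := by positivity
  have hf2 : (0:ℝ) < frobNorm J^2 := by positivity
  have hσne : sigmaMax J ≠ 0 := ne_of_gt hσpos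
  have hsne : sigmaMin J ≠ 0 := ne_of_gt hspos
  have hfne : frobNorm J ≠ 0 := ne_of_gt hfpos
  have hY : 0 ≤ (2*(1-η)*α - α^2) * (sigmaMin J^2 * E) / (1+η^2) := by positivity
  have hYX : (2*(1-η)*α - α^2) * (sigmaMin J^2 * E) / (1+η^2) ≤ 2*α*P - α^2*R := by
    rw [div_le_iff₀ hη2]
    have h1 : (2*(1-η)*α - α^2) * (sigmaMin J^2 * E) ≤ (2*(1-η)*α - α^2) * A2 :=
      mul_le_mul_of_nonneg_left hA2E hφ
    nlinarith [h1.trans hPt]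
  have hk : kappaF J = frobNorm J / sigmaMin J := rfl
  calc ‖xk1 - xstar‖^2 = E - 2*τ*P + τ^2*V := by rw [hLHS, hexp]
  _ ≤ E - 2*τ*P + τ^2*(sigmaMax J^2*R) := by
      nlinarith [mul_le_mul_of_nonneg_left hVle (sq_nonneg τ)]
  _ = E - (2*α*P - α^2*R)/(sigmaMax J^2) := by
      rw [hτdef]; field_simp; ring
  _ ≤ E - ((2*(1-η)*α - α^2) * (sigmaMin J^2 * E) / (1+η^2))/(sigmaMax J^2) :=
      sub_le_sub_left ((div_le_div_iff_of_pos_right hσ2).mpr hYX) E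
  _ ≤ E - ((2*(1-η)*α - α^2) * (sigmaMin J^2 * E) / (1+η^2))/(frobNorm J^2) :=
      sub_le_sub_left (div_le_div_of_nonneg_left hY hσ2 hσ_le_f) E
  _ = (1 - (2 * (1 - η) * α - α ^ 2) / ((1 + η ^ 2) * kappaF J ^ 2)) * E := by
      rw [hk]
      field_simp
  _ = (1 - (2 * (1 - η) * α - α ^ 2) / ((1 + η ^ 2) * kappaF J ^ 2))
        * ‖xk - xstar‖ ^ 2 := by rw [hE]
end

section
/- Let F : ℝⁿ → ℝᵐ satisfy the local tangential cone condition with constant η ∈ [0, 1/2), and suppose x⋆ ∈ ℝⁿ satisfies F(x⋆) = 0. Let α ∈ [1, 2(1−η)) and let (x_k)_{k≥0} be generated from an initial vector x₀ by x_{k+1} = x_k − α (F'_{I_k}(x_k))ᵀ F_{I_k}(x_k) / ‖F'_{I_k}(x_k)‖₂², where each I_k ⊆ {1,…,m} is a nonempty index subset such that F'_{I_k}(x_k) has full column rank. If there exists κ̄ > 0 such that κ_F(F'_{I_k}(x_k)) ≤ κ̄ for all k ≥ 0, then ‖x_k − x⋆‖₂² ≤ (1 − (2(1−η)α − α²) /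 ((1+η²) κ̄²))^k ‖x₀ − x⋆‖₂² for all k ≥ 0; in particular x_k converges to x⋆. -/
open Matrix

variable {m' : Type*} [Fintype m'] {n : ℕ}

-- eval of sums in EuclideanSpace
lemma euc_sum_apply {ι : Type*} (s : Finset ι) (f : ι → EuclideanSpace ℝ (Fin n)) (j : Fin n) :
    (∑ i ∈ s, f i) j = ∑ i ∈ s, f i j := by
  classical
  induction s using Finset.cons_induction with
  | empty => simp
  | cons a s ha ih => rw [Finset.sum_cons, Finset.sum_cons, PiLp.add_apply, ih]

-- quadratic form representation
lemma quad_repr (A : Matrix m' (Fin n) ℝ) (v : Fin n → ℝ) :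
    ∃ c : Fin n → ℝ,
      (v ⬝ᵥ ((Aᴴ * A) *ᵥ v)
        = ∑ j, (Matrix.isHermitian_conjTranspose_mul_self A).eigenvalues j * c j ^ 2)
      ∧ (v ⬝ᵥ v = ∑ j, c j ^ 2) := by
  classical
  set hB := Matrix.isHermitian_conjTranspose_mul_self A with hhB
  set b := hB.eigenvectorBasis with hb
  set vE : EuclideanSpace ℝ (Fin n) := WithLp.toLp 2 v with hvE
  set c : Fin n → ℝ := fun j => (inner ℝ (b j) vE : ℝ) with hc
  have hrep : ∑ j, c j • b j = vE := b.sum_repr' vE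
  have happly : ∀ i, v i = ∑ j, c j * b j i := by
    intro i
    have h1 : (∑ j, c j • b j) i = vE i := by rw [hrep]
    rw [euc_sum_apply] at h1
    simpa [PiLp.smul_apply, hvE] using h1.symm
  have horth : ∀ j k, (∑ i, b j i * b k i) = if j = k then 1 else 0 := by
    intro j k
    have h2 := (orthonormal_iff_ite.mp b.orthonormal) j k
    simpa [PiLp.inner_apply, RCLike.inner_apply, starRingEnd_apply, mul_comm] using h2
  have hvdot : ∀ j, ∑ i, v i * b j i = c j := by
    intro j
    calc ∑ i, v i * b j i = ∑ i, (∑ k, c k * b k i) * b j i := by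
          refine Finset.sum_congr rfl fun i _ => by rw [← happly i]
      _ = ∑ i, ∑ k, c k * b k i * b j i := by
          refine Finset.sum_congr rfl fun i _ => Finset.sum_mul _ _ _
      _ = ∑ k, ∑ i, c k * b k i * b j i := Finset.sum_comm
      _ = ∑ k, c k * ∑ i, b k i * b j i := by
          refine Finset.sum_congr rfl fun k _ => ?_
          rw [Finset.mul_sum]
          exact Finset.sum_congr rfl fun i _ => by ring
      _ = ∑ k, c k * (if k = j then 1 else 0) := by
          refine Finset.sum_congr rfl fun k _ => by rw [horth]
      _ = c j := by simp
  have hmul : ∀ j i', (∑ l, (Aᴴ * A) i' l * b j l) = hB.eigenvalues j * b j i' := by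
    intro j i'
    have h3 := hB.mulVec_eigenvectorBasis j
    have h4 : ((Aᴴ * A) *ᵥ ⇑(b j)) i' = (hB.eigenvalues j • ⇑(b j)) i' := by rw [h3]
    simpa [Matrix.mulVec, dotProduct] using h4
  have hBv : ∀ i', ((Aᴴ * A) *ᵥ v) i' = ∑ j, c j * (hB.eigenvalues j * b j i') := by
    intro i'
    calc ((Aᴴ * A) *ᵥ v) i' = ∑ l, (Aᴴ * A) i' l * v l := rfl
      _ = ∑ l, (Aᴴ * A) i' l * (∑ j, c j * b j l) := by
          refine Finset.sum_congr rfl fun l _ => by rw [← happly l]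
      _ = ∑ l, ∑ j, c j * ((Aᴴ * A) i' l * b j l) := by
          refine Finset.sum_congr rfl fun l _ => ?_
          rw [Finset.mul_sum]
          exact Finset.sum_congr rfl fun j _ => by ring
      _ = ∑ j, ∑ l, c j * ((Aᴴ * A) i' l * b j l) := Finset.sum_comm
      _ = ∑ j, c j * (hB.eigenvalues j * b j i') := by
          refine Finset.sum_congr rfl fun j _ => ?_
          rw [← Finset.mul_sum, hmul]
  refine ⟨c, ?_, ?_⟩
  · calc v ⬝ᵥ ((Aᴴ * A) *ᵥ v) = ∑ i, v i * ((Aᴴ * A) *ᵥ v) i := rfl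
      _ = ∑ i, v i * ∑ j, c j * (hB.eigenvalues j * b j i) := by
          refine Finset.sum_congr rfl fun i _ => by rw [hBv]
      _ = ∑ i, ∑ j, c j * hB.eigenvalues j * (v i * b j i) := by
          refine Finset.sum_congr rfl fun i _ => ?_
          rw [Finset.mul_sum]
          exact Finset.sum_congr rfl fun j _ => by ring
      _ = ∑ j, ∑ i, c j * hB.eigenvalues j * (v i * b j i) := Finset.sum_comm
      _ = ∑ j, hB.eigenvalues j * c j ^ 2 := by
          refine Finset.sum_congr rfl fun j _ => ?_
          rw [← Finset.mul_sum, hvdot]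
          ring
  · calc v ⬝ᵥ v = ∑ i, v i * v i := rfl
      _ = ∑ i, v i * ∑ j, c j * b j i := by
          refine Finset.sum_congr rfl fun i _ => by rw [← happly i]
      _ = ∑ i, ∑ j, c j * (v i * b j i) := by
          refine Finset.sum_congr rfl fun i _ => ?_
          rw [Finset.mul_sum]
          exact Finset.sum_congr rfl fun j _ => by ring
      _ = ∑ j, ∑ i, c j * (v i * b j i) := Finset.sum_comm
      _ = ∑ j, c j ^ 2 := by
          refine Finset.sum_congr rfl fun j _ => ?_
          rw [← Finset.mul_sum, hvdot]
          ring

section SV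
variable (A : Matrix m' (Fin n) ℝ)

lemma singVals_nonneg (j : Fin n) : 0 ≤ singVals A j := Real.sqrt_nonneg _

lemma singVals_sq (j : Fin n) :
    singVals A j ^ 2 = (Matrix.isHermitian_conjTranspose_mul_self A).eigenvalues j :=
  Real.sq_sqrt (Matrix.eigenvalues_conjTranspose_mul_self_nonneg A j)

lemma sigmaMin_le_singVals (j : Fin n) : sigmaMin A ≤ singVals A j :=
  ciInf_le (Set.finite_range _).bddBelow j

lemma singVals_le_sigmaMax (j : Fin n) : singVals A j ≤ sigmaMax A :=
  le_ciSup (Set.finite_range _).bddAbove j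

lemma sigmaMin_nonneg : 0 ≤ sigmaMin A :=
  Real.iInf_nonneg fun j => singVals_nonneg A j

lemma eig_le_sigmaMax_sq (j : Fin n) :
    (Matrix.isHermitian_conjTranspose_mul_self A).eigenvalues j ≤ sigmaMax A ^ 2 := by
  rw [← singVals_sq]
  exact pow_le_pow_left₀ (singVals_nonneg A j) (singVals_le_sigmaMax A j) 2

lemma sigmaMin_sq_le_eig (j : Fin n) :
    sigmaMin A ^ 2 ≤ (Matrix.isHermitian_conjTranspose_mul_self A).eigenvalues j := by
  rw [← singVals_sq]
  exact pow_le_pow_left₀ (sigmaMin_nonneg A) (sigmaMin_le_singVals A j) 2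

lemma quad_le (v : Fin n → ℝ) :
    v ⬝ᵥ ((Aᴴ * A) *ᵥ v) ≤ sigmaMax A ^ 2 * (v ⬝ᵥ v) := by
  obtain ⟨c, h1, h2⟩ := quad_repr A v
  rw [h1, h2, Finset.mul_sum]
  exact Finset.sum_le_sum fun j _ =>
    mul_le_mul_of_nonneg_right (eig_le_sigmaMax_sq A j) (sq_nonneg _)

lemma quad_ge (v : Fin n → ℝ) :
    sigmaMin A ^ 2 * (v ⬝ᵥ v) ≤ v ⬝ᵥ ((Aᴴ * A) *ᵥ v) := by
  obtain ⟨c, h1, h2⟩ := quad_repr A v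
  rw [h1, h2, Finset.mul_sum]
  exact Finset.sum_le_sum fun j _ =>
    mul_le_mul_of_nonneg_right (sigmaMin_sq_le_eig A j) (sq_nonneg _)

lemma mulVec_dot_eq (v : Fin n → ℝ) :
    (A *ᵥ v) ⬝ᵥ (A *ᵥ v) = v ⬝ᵥ ((Aᴴ * A) *ᵥ v) := by
  have h : v ᵥ* Aᴴ = A *ᵥ v := by
    rw [Matrix.vecMul_conjTranspose]; simp
  rw [← Matrix.mulVec_mulVec, Matrix.dotProduct_mulVec v Aᴴ (A *ᵥ v), h]

lemma dot_self_nonneg {ι : Type*} [Fintype ι] (v : ι → ℝ) : 0 ≤ v ⬝ᵥ v :=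
  Finset.sum_nonneg fun i _ => mul_self_nonneg _

lemma transpose_mulVec_dot_le (a : m' → ℝ) :
    (Aᴴ *ᵥ a) ⬝ᵥ (Aᴴ *ᵥ a) ≤ sigmaMax A ^ 2 * (a ⬝ᵥ a) := by
  set g : Fin n → ℝ := Aᴴ *ᵥ a with hg
  have h1 : g ⬝ᵥ g = a ⬝ᵥ (A *ᵥ g) := by
    rw [Matrix.dotProduct_mulVec a A g, hg, Matrix.conjTranspose_eq_transpose_of_trivial,
      Matrix.mulVec_transpose]
  have h2 : (A *ᵥ g) ⬝ᵥ (A *ᵥ g) ≤ sigmaMax A ^ 2 * (g ⬝ᵥ g) :=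
    (mulVec_dot_eq A g).le.trans (quad_le A g)
  have h3 : (a ⬝ᵥ (A *ᵥ g)) ^ 2 ≤ (a ⬝ᵥ a) * ((A *ᵥ g) ⬝ᵥ (A *ᵥ g)) := by
    simpa [dotProduct, pow_two, Finset.sum_mul_sq_le_sq_mul_sq] using
      Finset.sum_mul_sq_le_sq_mul_sq Finset.univ a (A *ᵥ g)
  have h4 : 0 ≤ g ⬝ᵥ g := dot_self_nonneg (ι := Fin n) g
  have h5 : 0 ≤ a ⬝ᵥ a := dot_self_nonneg a
  nlinarith [mul_le_mul_of_nonneg_left h2 h5, h3, h1, h4, h5, sq_nonneg (sigmaMax A), mul_nonneg (sq_nonneg (sigmaMax A)) h5]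

end SV

section SV2
variable (A : Matrix m' (Fin n) ℝ)

lemma eig_nonneg (j : Fin n) :
    0 ≤ (Matrix.isHermitian_conjTranspose_mul_self A).eigenvalues j :=
  Matrix.eigenvalues_conjTranspose_mul_self_nonneg A j

lemma trace_eq_sum_eig :
    Matrix.trace (Aᴴ * A) = ∑ j, (Matrix.isHermitian_conjTranspose_mul_self A).eigenvalues j := by
  set hB := Matrix.isHermitian_conjTranspose_mul_self A with hhB
  rw [hB.trace_eq_sum_eigenvalues]
  simp

lemma frob_sq_eq_sum_eig :
    (∑ i, ∑ j, A i j ^ 2) = ∑ j, (Matrix.isHermitian_conjTranspose_mul_self A).eigenvalues j := by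
  rw [← trace_eq_sum_eig]
  rw [Matrix.trace]
  simp only [Matrix.diag_apply, Matrix.mul_apply, Matrix.conjTranspose_apply]
  rw [Finset.sum_comm]
  refine Finset.sum_congr rfl fun i _ => Finset.sum_congr rfl fun j _ => by
    simp [pow_two]

lemma sigmaMax_sq_le_frob_sq [Nonempty (Fin n)] :
    sigmaMax A ^ 2 ≤ ∑ i, ∑ j, A i j ^ 2 := by
  obtain ⟨j0, hj0⟩ := Finite.exists_max (singVals A)
  have hmax : sigmaMax A = singVals A j0 := le_antisymm (ciSup_le hj0) (singVals_le_sigmaMax A j0)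
  rw [hmax, singVals_sq, frob_sq_eq_sum_eig]
  exact Finset.single_le_sum (fun j _ => eig_nonneg A j) (Finset.mem_univ j0)

lemma eig_pos (hrank : A.rank = n) (j : Fin n) :
    0 < (Matrix.isHermitian_conjTranspose_mul_self A).eigenvalues j := by
  set hB := Matrix.isHermitian_conjTranspose_mul_self A with hhB
  have hr : (Aᴴ * A).rank = n := by
    rw [Matrix.conjTranspose_eq_transpose_of_trivial, Matrix.rank_transpose_mul_self, hrank]
  have hrange : LinearMap.range (Aᴴ * A).mulVecLin = ⊤ := by
    apply Submodule.eq_top_of_finrank_eq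
    rw [show Module.finrank ℝ ↥(LinearMap.range (Aᴴ * A).mulVecLin) = (Aᴴ * A).rank from rfl, hr,
      Module.finrank_fintype_fun_eq_card, Fintype.card_fin]
  have hinj : Function.Injective (Aᴴ * A).mulVecLin :=
    (LinearMap.injective_iff_surjective).mpr (LinearMap.range_eq_top.mp hrange)
  rcases (eig_nonneg A j).lt_or_eq with h | h
  · exact h
  · exfalso
    have h5 := hB.mulVec_eigenvectorBasis j
    rw [← h, zero_smul] at h5
    have h6 : (⇑(hB.eigenvectorBasis j) : Fin n → ℝ) = 0 := by
      apply hinj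
      rw [Matrix.mulVecLin_apply, h5]
      simp
    exact hB.eigenvectorBasis.orthonormal.ne_zero j (by simpa using congrArg (WithLp.toLp 2) h6)

end SV2

section SV3
variable (A : Matrix m' (Fin n) ℝ)

lemma sigmaMin_pos [Nonempty (Fin n)] (hrank : A.rank = n) : 0 < sigmaMin A := by
  obtain ⟨j1, hj1⟩ := Finite.exists_min (singVals A)
  have h1 : 0 < singVals A j1 := Real.sqrt_pos.mpr (eig_pos A hrank j1)
  exact h1.trans_le (le_ciInf hj1)

lemma frobNorm_sq (hA : True) : frobNorm A ^ 2 = ∑ i, ∑ j, A i j ^ 2 := by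
  rw [frobNorm]
  exact Real.sq_sqrt (Finset.sum_nonneg fun i _ => Finset.sum_nonneg fun j _ => sq_nonneg _)

lemma frobNorm_nonneg : 0 ≤ frobNorm A := Real.sqrt_nonneg _

lemma sigmaMax_nonneg [Nonempty (Fin n)] : 0 ≤ sigmaMax A := by
  obtain ⟨j⟩ := (inferInstance : Nonempty (Fin n))
  exact (singVals_nonneg A j).trans (singVals_le_sigmaMax A j)

lemma sigmaMax_le_frobNorm [Nonempty (Fin n)] : sigmaMax A ≤ frobNorm A := by
  have h1 : sigmaMax A ^ 2 ≤ frobNorm A ^ 2 := by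
    rw [frobNorm_sq A trivial]; exact sigmaMax_sq_le_frob_sq A
  nlinarith [sigmaMax_nonneg A, frobNorm_nonneg A]

lemma sigmaMin_le_sigmaMax [Nonempty (Fin n)] : sigmaMin A ≤ sigmaMax A := by
  obtain ⟨j⟩ := (inferInstance : Nonempty (Fin n))
  exact (sigmaMin_le_singVals A j).trans (singVals_le_sigmaMax A j)

lemma one_le_kappaF [Nonempty (Fin n)] (hrank : A.rank = n) : 1 ≤ kappaF A := by
  rw [kappaF]
  rw [le_div_iff₀ (sigmaMin_pos A hrank), one_mul]
  exact (sigmaMin_le_sigmaMax A).trans (sigmaMax_le_frobNorm A)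

end SV3

set_option maxHeartbeats 1000000 in
lemma step_core {m' : Type*} [Fintype m'] {n : ℕ} [Nonempty (Fin n)] (A : Matrix m' (Fin n) ℝ)
    (hrank : A.rank = n) (η α κbar : ℝ) (hη0 : 0 ≤ η) (hη : η < 1 / 2)
    (hα1 : 1 ≤ α) (hα2 : α < 2 * (1 - η)) (hκ : kappaF A ≤ κbar)
    (a : m' → ℝ) (e : Fin n → ℝ)
    (hl : ∀ i, |a i - (A *ᵥ e) i| ≤ η * |a i|) :
    ∑ j, (e j - (α / sigmaMax A ^ 2) * (Aᴴ *ᵥ a) j) ^ 2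
      ≤ (1 - (2 * (1 - η) * α - α ^ 2) / ((1 + η ^ 2) * κbar ^ 2)) * ∑ j, e j ^ 2 := by
  have hsmin : 0 < sigmaMin A := sigmaMin_pos A hrank
  set σ2 := sigmaMax A ^ 2 with hσ2def
  set s2 := sigmaMin A ^ 2 with hs2def
  have hs2 : 0 < s2 := pow_pos hsmin 2
  have hσ2 : 0 < σ2 := pow_pos (hsmin.trans_le (sigmaMin_le_sigmaMax A)) 2
  have hκ1 : 1 ≤ κbar := (one_le_kappaF A hrank).trans hκ
  have hκpos : 0 < κbar := lt_of_lt_of_le one_pos hκ1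
  have hfrob_eq : frobNorm A = kappaF A * sigmaMin A := by
    rw [kappaF, div_mul_cancel₀ _ hsmin.ne']
  have hσ2κ : σ2 ≤ κbar ^ 2 * s2 := by
    have h1 : sigmaMax A ≤ κbar * sigmaMin A := by
      refine (sigmaMax_le_frobNorm A).trans ?_
      rw [hfrob_eq]
      exact mul_le_mul_of_nonneg_right hκ hsmin.le
    have h2 : sigmaMax A ^ 2 ≤ (κbar * sigmaMin A) ^ 2 :=
      pow_le_pow_left₀ (sigmaMax_nonneg A) h1 2
    calc σ2 ≤ (κbar * sigmaMin A) ^ 2 := h2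
      _ = κbar ^ 2 * s2 := by rw [hs2def]; ring
  set b : m' → ℝ := A *ᵥ e with hbdef
  set g : Fin n → ℝ := Aᴴ *ᵥ a with hgdef
  set S := ∑ i, a i ^ 2 with hSdef
  set T := ∑ i, b i ^ 2 with hTdef
  set P := ∑ i, a i * b i with hPdef
  set G := ∑ j, g j ^ 2 with hGdef
  set W := ∑ j, e j ^ 2 with hWdef
  have hS : 0 ≤ S := Finset.sum_nonneg fun i _ => sq_nonneg _
  have hT : 0 ≤ T := Finset.sum_nonneg fun i _ => sq_nonneg _
  have hW : 0 ≤ W := Finset.sum_nonneg fun i _ => sq_nonneg _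
  have hG : 0 ≤ G := Finset.sum_nonneg fun i _ => sq_nonneg _
  have hab : ∀ i, (a i - b i) ^ 2 ≤ η ^ 2 * a i ^ 2 := by
    intro i
    have h1 := mul_self_le_mul_self (abs_nonneg (a i - b i)) (hl i)
    nlinarith [sq_abs (a i - b i), sq_abs (a i)]
  have h4 : (1 - η ^ 2) * S + T ≤ 2 * P := by
    have hper : ∀ i, (1 - η ^ 2) * a i ^ 2 + b i ^ 2 ≤ 2 * (a i * b i) := by
      intro i; nlinarith [hab i]
    calc (1 - η ^ 2) * S + T = ∑ i, ((1 - η ^ 2) * a i ^ 2 + b i ^ 2) := by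
          rw [Finset.sum_add_distrib, ← Finset.mul_sum]
      _ ≤ ∑ i, 2 * (a i * b i) := Finset.sum_le_sum fun i _ => hper i
      _ = 2 * P := by rw [← Finset.mul_sum]
  have hZpos : (0:ℝ) < (1 - η) ^ 2 := pow_pos (by linarith) 2
  have h5 : (1 - η) ^ 2 * S ≤ T := by
    have hper : ∀ i, (1 - η) ^ 2 * a i ^ 2 ≤ b i ^ 2 := by
      intro i
      have h1 : |a i| - |b i| ≤ |a i - b i| := abs_sub_abs_le_abs_sub _ _
      have h2 : (1 - η) * |a i| ≤ |b i| := by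
        have h2' : |a i| - η * |a i| ≤ |b i| := by linarith [hl i]
        calc (1 - η) * |a i| = |a i| - η * |a i| := by ring
          _ ≤ |b i| := h2'
      have h3 := mul_self_le_mul_self
        (mul_nonneg (by linarith : (0:ℝ) ≤ 1 - η) (abs_nonneg (a i))) h2
      nlinarith [sq_abs (a i), sq_abs (b i)]
    calc (1 - η) ^ 2 * S = ∑ i, (1 - η) ^ 2 * a i ^ 2 := by rw [Finset.mul_sum]
      _ ≤ T := Finset.sum_le_sum fun i _ => hper i
  have h3 : s2 * W ≤ T := by
    have hq := quad_ge A e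
    have heq := mulVec_dot_eq A e
    have h1 : e ⬝ᵥ e = W := by simp [dotProduct, hWdef, pow_two]
    have h2 : b ⬝ᵥ b = T := by simp [dotProduct, hTdef, pow_two]
    rw [h1] at hq
    rw [← hbdef] at heq
    rw [h2] at heq
    rw [← hs2def] at hq
    linarith [hq, heq.ge, heq.le]
  have h2G : G ≤ σ2 * S := by
    have := transpose_mulVec_dot_le A a
    have h1 : g ⬝ᵥ g = G := by simp [dotProduct, hGdef, pow_two]
    have h2 : a ⬝ᵥ a = S := by simp [dotProduct, hSdef, pow_two]
    rw [← hgdef, h1, h2] at this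
    exact this
  have h1P : ∑ j, e j * g j = P := by
    have h1 : e ⬝ᵥ g = P := by
      rw [hgdef, Matrix.dotProduct_mulVec e Aᴴ a, Matrix.vecMul_conjTranspose]
      simp only [star_trivial]
      rw [← hbdef, hPdef]
      simp [dotProduct, mul_comm]
    simpa [dotProduct] using h1
  set c := α / σ2 with hcdef
  have hc : 0 < c := div_pos (by linarith) hσ2
  have hexp : ∑ j, (e j - c * g j) ^ 2 = W - 2 * c * P + c ^ 2 * G := by
    calc ∑ j, (e j - c * g j) ^ 2
        = ∑ j, (e j ^ 2 - 2 * c * (e j * g j) + c ^ 2 * g j ^ 2) := by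
          refine Finset.sum_congr rfl fun j _ => by ring
      _ = (∑ j, (e j ^ 2 - 2 * c * (e j * g j))) + c ^ 2 * G := by
          rw [Finset.sum_add_distrib, ← Finset.mul_sum]
      _ = W - 2 * c * P + c ^ 2 * G := by
          rw [Finset.sum_sub_distrib, ← Finset.mul_sum, h1P]
  have hA1 : α ^ 2 * G * (1 - η) ^ 2 + α * (2 - 2 * η - α) * (T * σ2)
      ≤ 2 * α * σ2 * P * (1 - η) ^ 2 := by
    have hαpos : (0:ℝ) < α := by linarith
    have hint1 := mul_le_mul_of_nonneg_left h4
      (show (0:ℝ) ≤ α * σ2 * (1 - η) ^ 2 by positivity)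
    have hint2 := mul_le_mul_of_nonneg_left h2G
      (show (0:ℝ) ≤ α ^ 2 * (1 - η) ^ 2 by positivity)
    have hint3 := mul_le_mul_of_nonneg_left h5
      (show (0:ℝ) ≤ (α - 1 + η ^ 2) * (α * σ2) by
        have h9 : (0:ℝ) ≤ α - 1 + η ^ 2 := by nlinarith
        positivity)
    linarith [hint1, hint2, hint3]
  rw [hexp]
  have hD : (0:ℝ) < (1 + η ^ 2) * κbar ^ 2 := by positivity
  have hrw : (1 - (2 * (1 - η) * α - α ^ 2) / ((1 + η ^ 2) * κbar ^ 2)) * W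
      = W - (2 * (1 - η) * α - α ^ 2) * W / ((1 + η ^ 2) * κbar ^ 2) := by ring
  rw [hrw]
  have hgoal : (2 * (1 - η) * α - α ^ 2) * W / ((1 + η ^ 2) * κbar ^ 2)
      ≤ 2 * c * P - c ^ 2 * G := by
    rw [div_le_iff₀ hD]
    have hexp2 : (2 * c * P - c ^ 2 * G) * (σ2 ^ 2 * (1 - η) ^ 2)
        = 2 * α * σ2 * P * (1 - η) ^ 2 - α ^ 2 * G * (1 - η) ^ 2 := by
      rw [hcdef]; have hσ2ne := hσ2.ne'
      field_simp
    have hA1' : (2 * (1 - η) * α - α ^ 2) * (T * σ2)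
        ≤ (2 * c * P - c ^ 2 * G) * (σ2 ^ 2 * (1 - η) ^ 2) := by
      rw [hexp2]; linarith [hA1]
    have h8 : W * σ2 * (1 - η) ^ 2 ≤ T * ((1 + η ^ 2) * κbar ^ 2) := by
      have e1 : W * σ2 * (1 - η) ^ 2 ≤ W * (κbar ^ 2 * s2) * (1 - η) ^ 2 :=
        mul_le_mul_of_nonneg_right (mul_le_mul_of_nonneg_left hσ2κ hW) hZpos.le
      have e2 : s2 * W * (κbar ^ 2 * (1 - η) ^ 2) ≤ T * (κbar ^ 2 * (1 - η) ^ 2) :=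
        mul_le_mul_of_nonneg_right h3 (by positivity)
      have e3 : T * (κbar ^ 2 * (1 - η) ^ 2) ≤ T * (κbar ^ 2 * (1 + η ^ 2)) := by
        refine mul_le_mul_of_nonneg_left ?_ hT
        have h9 : (1 - η) ^ 2 ≤ 1 + η ^ 2 := by nlinarith
        nlinarith [sq_nonneg κbar]
      linarith [e1, e2, e3]
    have hN : (0:ℝ) < 2 * (1 - η) * α - α ^ 2 := by nlinarith
    have hfin : ((2 * (1 - η) * α - α ^ 2) * W) * (σ2 ^ 2 * (1 - η) ^ 2)
        ≤ ((2 * c * P - c ^ 2 * G) * ((1 + η ^ 2) * κbar ^ 2)) * (σ2 ^ 2 * (1 - η) ^ 2) := by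
      have k1 := mul_le_mul_of_nonneg_left h8 (mul_nonneg hN.le hσ2.le)
      have k2 := mul_le_mul_of_nonneg_left hA1' hD.le
      linarith [k1, k2]
    exact le_of_mul_le_mul_right hfin (by positivity)
  linarith [hgoal]

/-- the averaging block nonlinear Kaczmarz method with constant stepsize
`α ∈ [1, 2(1−η))` converges: if `κ_F(F'_{I_k}(x_k)) ≤ κ̄` for all `k`, then
`‖x_k − x⋆‖₂² ≤ (1 − (2(1−η)α − α²)/((1+η²) κ̄²))^k ‖x₀ − x⋆‖₂²` and `x_k → x⋆`. -/
theorem abnk_constant_stepsize_convergence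
    {n m : ℕ}
    (F : Fin m → EuclideanSpace ℝ (Fin n) → ℝ)
    (grad : Fin m → EuclideanSpace ℝ (Fin n) → EuclideanSpace ℝ (Fin n))
    (η : ℝ) (hη0 : 0 ≤ η) (hη : η < 1 / 2)
    -- F is differentiable with Jacobian whose i-th row is ∇F_i
    (hdiff : ∀ i x, HasGradientAt (F i) (grad i x) x)
    -- local tangential cone condition with constant η
    (hltcc : ∀ i (x₁ x₂ : EuclideanSpace ℝ (Fin n)),
      |F i x₁ - F i x₂ - ∑ j, grad i x₁ j * (x₁ j - x₂ j)| ≤ η * |F i x₁ - F i x₂|)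
    (xstar : EuclideanSpace ℝ (Fin n)) (hstar : ∀ i, F i xstar = 0)
    (α : ℝ) (hα1 : 1 ≤ α) (hα2 : α < 2 * (1 - η))
    (x : ℕ → EuclideanSpace ℝ (Fin n))
    (I : ℕ → Finset (Fin m)) (hI : ∀ k, (I k).Nonempty)
    -- the row-submatrices F'_{I_k}(x_k) of the Jacobian
    (J : ∀ k, Matrix {i // i ∈ I k} (Fin n) ℝ)
    (hJdef : ∀ k, J k = Matrix.of fun (i : {i // i ∈ I k}) (j : Fin n) => grad i.1 (x k) j)
    -- each F'_{I_k}(x_k) has full column rank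
    (hrank : ∀ k, (J k).rank = n)
    -- x_{k+1} = x_k − α (F'_{I_k}(x_k))ᵀ F_{I_k}(x_k) / ‖F'_{I_k}(x_k)‖₂²
    (hupd : ∀ k, x (k + 1)
      = x k - (α / sigmaMax (J k) ^ 2) • ∑ i ∈ I k, F i (x k) • grad i (x k))
    (κbar : ℝ) (hκ0 : 0 < κbar)
    (hκ : ∀ k, kappaF (J k) ≤ κbar) :
    (∀ k, ‖x k - xstar‖ ^ 2
        ≤ (1 - (2 * (1 - η) * α - α ^ 2) / ((1 + η ^ 2) * κbar ^ 2)) ^ k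
            * ‖x 0 - xstar‖ ^ 2)
      ∧ Filter.Tendsto x Filter.atTop (nhds xstar) := by
  rcases Nat.eq_zero_or_pos n with hn | hn
  · subst hn
    have hsub : ∀ y z : EuclideanSpace ℝ (Fin 0), y = z := fun y z =>
      by ext i; exact i.elim0
    constructor
    · intro k
      rw [show x k - xstar = 0 from hsub _ _, show x 0 - xstar = 0 from hsub _ _, norm_zero]
      simp
    · have hx : x = fun _ => xstar := funext fun k => hsub _ _
      rw [hx]
      exact tendsto_const_nhds
  · haveI : Nonempty (Fin n) := ⟨⟨0, hn⟩⟩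
    set q := 1 - (2 * (1 - η) * α - α ^ 2) / ((1 + η ^ 2) * κbar ^ 2) with hqdef
    have hnorm : ∀ y : EuclideanSpace ℝ (Fin n), ‖y‖ ^ 2 = ∑ j, y j ^ 2 := by
      intro y
      rw [EuclideanSpace.norm_eq, Real.sq_sqrt (Finset.sum_nonneg fun j _ => sq_nonneg _)]
      exact Finset.sum_congr rfl fun j _ => by rw [Real.norm_eq_abs, sq_abs]
    have hstep : ∀ k, ‖x (k + 1) - xstar‖ ^ 2 ≤ q * ‖x k - xstar‖ ^ 2 := by
      intro k
      set e : Fin n → ℝ := fun j => x k j - xstar j with hedef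
      set a : {i // i ∈ I k} → ℝ := fun i => F i.1 (x k) with hadef
      have h2 : ∀ j : Fin n, ((∑ i ∈ I k, F i (x k) • grad i (x k) : EuclideanSpace ℝ (Fin n))) j
          = ∑ i ∈ I k, F i (x k) * grad i (x k) j := by
        intro j
        rw [euc_sum_apply]
        exact Finset.sum_congr rfl fun i _ => by rw [PiLp.smul_apply, smul_eq_mul]
      have h3 : ∀ j : Fin n, ((J k)ᴴ *ᵥ a) j = ∑ i ∈ I k, F i (x k) * grad i (x k) j := by
        intro j
        rw [show ((J k)ᴴ *ᵥ a) j = ∑ i : {i // i ∈ I k}, (J k) i j * a i by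
          simp [Matrix.mulVec, dotProduct, Matrix.conjTranspose_apply]]
        rw [← Finset.sum_coe_sort (I k) (fun i => F i (x k) * grad i (x k) j)]
        refine Finset.sum_congr rfl fun i _ => ?_
        rw [hJdef k, hadef]
        simp [mul_comm]
      have hcoord : ∀ j, (x (k + 1) - xstar) j
          = e j - (α / sigmaMax (J k) ^ 2) * ((J k)ᴴ *ᵥ a) j := by
        intro j
        rw [PiLp.sub_apply, hupd k, PiLp.sub_apply, PiLp.smul_apply, smul_eq_mul, h2 j, ← h3 j,
          hedef]
        ring
      have hl : ∀ i : {i // i ∈ I k}, |a i - ((J k) *ᵥ e) i| ≤ η * |a i| := by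
        intro i
        have h4 := hltcc i.1 (x k) xstar
        rw [hstar i.1, sub_zero] at h4
        have h5 : ((J k) *ᵥ e) i = ∑ j, grad i.1 (x k) j * (x k j - xstar j) := by
          rw [hJdef k]
          simp [Matrix.mulVec, dotProduct, hedef]
        rw [h5, hadef]
        exact h4
      have hcore := step_core (J k) (hrank k) η α κbar hη0 hη hα1 hα2 (hκ k) a e hl
      rw [hnorm (x (k + 1) - xstar), hnorm (x k - xstar)]
      calc ∑ j, ((x (k + 1) - xstar) j) ^ 2
          = ∑ j, (e j - (α / sigmaMax (J k) ^ 2) * ((J k)ᴴ *ᵥ a) j) ^ 2 :=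
            Finset.sum_congr rfl fun j _ => by rw [hcoord j]
        _ ≤ q * ∑ j, e j ^ 2 := hcore
        _ = q * ∑ j, ((x k - xstar) j) ^ 2 := by
            refine congrArg _ (Finset.sum_congr rfl fun j _ => ?_)
            rw [hedef, PiLp.sub_apply]
    have hκ1 : 1 ≤ κbar := (one_le_kappaF (J 0) (hrank 0)).trans (hκ 0)
    have hD : (0:ℝ) < (1 + η ^ 2) * κbar ^ 2 := by positivity
    have hq0 : 0 ≤ q := by
      rw [hqdef, sub_nonneg, div_le_one hD]
      nlinarith [sq_nonneg (α - (1 - η)), sq_nonneg η, sq_nonneg (κbar - 1), sq_nonneg (η * κbar)]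
    have hq1 : q < 1 := by
      rw [hqdef]
      have hN : (0:ℝ) < 2 * (1 - η) * α - α ^ 2 := by nlinarith
      have := div_pos hN hD
      linarith
    have hmain : ∀ k, ‖x k - xstar‖ ^ 2 ≤ q ^ k * ‖x 0 - xstar‖ ^ 2 := by
      intro k
      induction k with
      | zero => simp
      | succ k ih =>
        calc ‖x (k + 1) - xstar‖ ^ 2 ≤ q * ‖x k - xstar‖ ^ 2 := hstep k
          _ ≤ q * (q ^ k * ‖x 0 - xstar‖ ^ 2) := mul_le_mul_of_nonneg_left ih hq0
          _ = q ^ (k + 1) * ‖x 0 - xstar‖ ^ 2 := by ring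
    refine ⟨hmain, ?_⟩
    have h0 : Filter.Tendsto (fun k => q ^ k * ‖x 0 - xstar‖ ^ 2) Filter.atTop (nhds 0) := by
      have h1 := (tendsto_pow_atTop_nhds_zero_of_lt_one hq0 hq1).mul_const (‖x 0 - xstar‖ ^ 2)
      simpa using h1
    have hsq : Filter.Tendsto (fun k => ‖x k - xstar‖ ^ 2) Filter.atTop (nhds 0) :=
      squeeze_zero (fun k => sq_nonneg _) hmain h0
    have hnrm : Filter.Tendsto (fun k => ‖x k - xstar‖) Filter.atTop (nhds 0) := by
      have h2 := hsq.sqrt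
      simpa [Real.sqrt_sq (norm_nonneg _)] using h2
    exact tendsto_iff_norm_sub_tendsto_zero.mpr hnrm
end

section
/- Let F : ℝⁿ → ℝᵐ satisfy the local tangential cone condition with constant η ∈ [0, 1/2), and suppose x⋆ ∈ ℝⁿ satisfies F(x⋆) = 0. Let I ⊆ {1,…,m} be a nonempty index subset, let x_k ∈ ℝⁿ be such that F'_I(x_k) has full column rank and (F'_I(x_k))ᵀ F_I(x_k) ≠ 0, let δ ∈ (0, 2(1−η)), and define x_{k+1} = x_k − δ (‖F_I(x_k)‖₂² / ‖(F'_I(x_k))ᵀ F_I(x_k)‖₂²) (F'_I(x_k))ᵀ F_I(x_k). Then ‖x_{k+1} − x⋆‖₂² ≤ (1 − (2(1−η)δ − δ²) / ((1+η²) κ²(F'_I(x_k)))) ‖x_k − x⋆‖₂², where κ(A) = σ_max(A)/σ_min(A). -/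
open Matrix

/-- The condition number `κ(A) = σ_max(A) / σ_min(A)`. -/
noncomputable def kappa {m' : Type*} [Fintype m'] {n : ℕ}
    (A : Matrix m' (Fin n) ℝ) : ℝ :=
  sigmaMax A / sigmaMin A

set_option maxHeartbeats 2000000

lemma star_real' {n' : Type*} [Fintype n'] (U : Matrix n' n' ℝ) : star U = Uᵀ := by
  rw [Matrix.star_eq_conjTranspose, Matrix.conjTranspose_eq_transpose_of_trivial]

lemma rayleigh_repr' {n : ℕ} (M : Matrix (Fin n) (Fin n) ℝ) (hM : M.IsHermitian)
    (v : Fin n → ℝ) :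
    ∃ w : Fin n → ℝ, (∑ j, (w j)^2 = ∑ j, (v j)^2) ∧
      v ⬝ᵥ (M *ᵥ v) = ∑ j, hM.eigenvalues j * (w j)^2 := by
  set U : Matrix (Fin n) (Fin n) ℝ := (hM.eigenvectorUnitary : Matrix (Fin n) (Fin n) ℝ) with hU
  have hUU : U * Uᵀ = 1 := by
    rw [← star_real']; exact (Matrix.mem_unitaryGroup_iff).mp hM.eigenvectorUnitary.2
  refine ⟨Uᵀ *ᵥ v, ?_, ?_⟩
  · have h1 : (Uᵀ *ᵥ v) ⬝ᵥ (Uᵀ *ᵥ v) = v ⬝ᵥ v := by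
      rw [dotProduct_mulVec, ← mulVec_transpose, Matrix.transpose_transpose,
        mulVec_mulVec, hUU, one_mulVec]
    simpa [dotProduct, pow_two] using h1
  · conv_lhs => rw [hM.spectral_theorem]
    rw [Unitary.conjStarAlgAut_apply, star_real', ← hU, ← mulVec_mulVec, ← mulVec_mulVec, dotProduct_mulVec, ← mulVec_transpose]
    simp only [dotProduct, mulVec_diagonal, Function.comp_apply, RCLike.ofReal_real_eq_id, id]
    exact Finset.sum_congr rfl (fun j _ => by ring)

lemma quadform_eq' {m' : Type*} [Fintype m'] {n : ℕ} (A : Matrix m' (Fin n) ℝ)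
    (v : Fin n → ℝ) : v ⬝ᵥ ((Aᴴ * A) *ᵥ v) = ∑ i, ((A *ᵥ v) i)^2 := by
  rw [Matrix.conjTranspose_eq_transpose_of_trivial, ← mulVec_mulVec, dotProduct_mulVec,
    ← mulVec_transpose, Matrix.transpose_transpose]
  simp [dotProduct, pow_two]

lemma jacobian_bounds' {m' : Type*} [Fintype m'] {n : ℕ} (hn : 0 < n)
    (A : Matrix m' (Fin n) ℝ) (hr : A.rank = n) :
    0 < sigmaMin A ∧ sigmaMin A ≤ sigmaMax A ∧
    (∀ v : Fin n → ℝ, sigmaMin A ^ 2 * ∑ j, (v j)^2 ≤ ∑ i, ((A *ᵥ v) i)^2) ∧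
    (∀ v : Fin n → ℝ, ∑ i, ((A *ᵥ v) i)^2 ≤ sigmaMax A ^ 2 * ∑ j, (v j)^2) := by
  haveI : Nonempty (Fin n) := ⟨⟨0, hn⟩⟩
  have hM := Matrix.isHermitian_conjTranspose_mul_self A
  have hker : LinearMap.ker A.mulVecLin = ⊥ := by
    have h1 : Module.finrank ℝ (LinearMap.range A.mulVecLin)
        + Module.finrank ℝ (LinearMap.ker A.mulVecLin)
        = Module.finrank ℝ (Fin n → ℝ) :=
      LinearMap.finrank_range_add_finrank_ker _
    rw [Matrix.rank] at hr
    rw [hr, Module.finrank_pi, Fintype.card_fin] at h1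
    have h0 : Module.finrank ℝ (LinearMap.ker A.mulVecLin) = 0 := by omega
    exact Submodule.finrank_eq_zero.mp h0
  have hinj : ∀ v : Fin n → ℝ, v ≠ 0 → A *ᵥ v ≠ 0 := by
    intro v hv hAv
    have hi := LinearMap.ker_eq_bot.mp hker
    exact hv (hi (show A.mulVecLin v = A.mulVecLin 0 by
      simp [Matrix.mulVecLin_apply, hAv]))
  have hpd : (Aᴴ * A).PosDef := by
    refine Matrix.posDef_iff_dotProduct_mulVec.mpr ⟨hM, fun x hx => ?_⟩
    have hs : star x = x := by funext i; simp
    rw [hs, quadform_eq']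
    have hAx : A *ᵥ x ≠ 0 := hinj x hx
    have hex : ∃ i, (A *ᵥ x) i ≠ 0 := by
      by_contra h
      push_neg at h
      exact hAx (funext h)
    obtain ⟨i0, hi0⟩ := hex
    exact Finset.sum_pos' (fun i _ => sq_nonneg _)
      ⟨i0, Finset.mem_univ _, by positivity⟩
  have hev : ∀ j, 0 < hM.eigenvalues j := fun j => hpd.eigenvalues_pos j
  have hsv_pos : ∀ j, 0 < singVals A j := fun j => Real.sqrt_pos.mpr (hev j)
  have hbddB : BddBelow (Set.range (singVals A)) := (Set.finite_range _).bddBelow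
  have hbddA : BddAbove (Set.range (singVals A)) := (Set.finite_range _).bddAbove
  have hmin_le : ∀ j, sigmaMin A ≤ singVals A j := fun j => ciInf_le hbddB j
  have hle_max : ∀ j, singVals A j ≤ sigmaMax A := fun j => le_ciSup hbddA j
  have hmin_pos : 0 < sigmaMin A := by
    obtain ⟨j0, hj0⟩ := Finite.exists_min (singVals A)
    have h : sigmaMin A = singVals A j0 := le_antisymm (hmin_le j0) (le_ciInf hj0)
    rw [h]; exact hsv_pos j0
  have hsq_lo : ∀ j, sigmaMin A ^ 2 ≤ hM.eigenvalues j := by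
    intro j
    have h2 : sigmaMin A ^ 2 ≤ singVals A j ^ 2 :=
      pow_le_pow_left₀ hmin_pos.le (hmin_le j) 2
    rwa [singVals, Real.sq_sqrt (hev j).le] at h2
  have hsq_hi : ∀ j, hM.eigenvalues j ≤ sigmaMax A ^ 2 := by
    intro j
    have h2 : singVals A j ^ 2 ≤ sigmaMax A ^ 2 :=
      pow_le_pow_left₀ (Real.sqrt_nonneg _) (hle_max j) 2
    rwa [singVals, Real.sq_sqrt (hev j).le] at h2
  refine ⟨hmin_pos, le_trans (hmin_le (Classical.arbitrary _)) (hle_max _), fun v => ?_, fun v => ?_⟩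
  · obtain ⟨w, hw1, hw2⟩ := rayleigh_repr' (Aᴴ * A) hM v
    rw [← quadform_eq', hw2, ← hw1, Finset.mul_sum]
    exact Finset.sum_le_sum fun j _ => mul_le_mul_of_nonneg_right (hsq_lo j) (sq_nonneg _)
  · obtain ⟨w, hw1, hw2⟩ := rayleigh_repr' (Aᴴ * A) hM v
    rw [← quadform_eq', hw2, ← hw1, Finset.mul_sum]
    exact Finset.sum_le_sum fun j _ => mul_le_mul_of_nonneg_right (hsq_hi j) (sq_nonneg _)

/-- Theorem 4: one step of the averaging block nonlinear Kaczmarz method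
with adaptive stepsize, `δ ∈ (0, 2(1−η))`, satisfies
`‖x_{k+1} − x⋆‖₂² ≤ (1 − (2(1−η)δ − δ²)/((1+η²) κ²(F'_I(x_k)))) ‖x_k − x⋆‖₂²`. -/
theorem abnk_adaptive_stepsize_convergence_factor
    {n m : ℕ}
    (F : Fin m → EuclideanSpace ℝ (Fin n) → ℝ)
    (grad : Fin m → EuclideanSpace ℝ (Fin n) → EuclideanSpace ℝ (Fin n))
    (η : ℝ) (hη0 : 0 ≤ η) (hη : η < 1 / 2)
    -- F is differentiable with Jacobian whose i-th row is ∇F_i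
    (hdiff : ∀ i x, HasGradientAt (F i) (grad i x) x)
    -- local tangential cone condition with constant η
    (hltcc : ∀ i (x₁ x₂ : EuclideanSpace ℝ (Fin n)),
      |F i x₁ - F i x₂ - ∑ j, grad i x₁ j * (x₁ j - x₂ j)| ≤ η * |F i x₁ - F i x₂|)
    (xstar : EuclideanSpace ℝ (Fin n)) (hstar : ∀ i, F i xstar = 0)
    (S : Finset (Fin m)) (hS : S.Nonempty)
    (xk : EuclideanSpace ℝ (Fin n))
    -- the row-submatrix F'_I(x_k) of the Jacobian
    (J : Matrix {i // i ∈ S} (Fin n) ℝ)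
    (hJdef : J = Matrix.of fun (i : {i // i ∈ S}) (j : Fin n) => grad i.1 xk j)
    -- F'_I(x_k) has full column rank
    (hrank : J.rank = n)
    -- g = (F'_I(x_k))ᵀ F_I(x_k)
    (g : EuclideanSpace ℝ (Fin n))
    (hgdef : g = ∑ i ∈ S, F i xk • grad i xk)
    (hg : g ≠ 0)
    (δ : ℝ) (hδ0 : 0 < δ) (hδ2 : δ < 2 * (1 - η))
    (xk1 : EuclideanSpace ℝ (Fin n))
    -- x_{k+1} = x_k − δ (‖F_I(x_k)‖₂² / ‖g‖₂²) g
    (hupd : xk1 = xk - (δ * (∑ i ∈ S, (F i xk) ^ 2) / ‖g‖ ^ 2) • g) :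
    ‖xk1 - xstar‖ ^ 2
      ≤ (1 - (2 * (1 - η) * δ - δ ^ 2) / ((1 + η ^ 2) * kappa J ^ 2))
          * ‖xk - xstar‖ ^ 2 := by
  classical
  have hnormsq : ∀ x : EuclideanSpace ℝ (Fin n), ‖x‖^2 = ∑ j, (x j)^2 := by
    intro x
    rw [EuclideanSpace.norm_eq, Real.sq_sqrt (by positivity)]
    exact Finset.sum_congr rfl fun j _ => by rw [Real.norm_eq_abs, sq_abs]
  -- abbreviations
  set ev : Fin n → ℝ := fun j => xk j - xstar j with hev
  set f : Fin m → ℝ := fun i => F i xk with hf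
  set s : Fin m → ℝ := fun i => ∑ j, grad i xk j * ev j with hs
  set a : ℝ := ∑ i ∈ S, f i ^ 2 with ha
  set p : ℝ := ∑ i ∈ S, f i * s i with hp
  set q : ℝ := ∑ i ∈ S, s i ^ 2 with hq
  set E : ℝ := ∑ j, ev j ^ 2 with hE
  set G2 : ℝ := ∑ j, (g j) ^ 2 with hG2
  set σm : ℝ := sigmaMin J with hσm
  set σM : ℝ := sigmaMax J with hσM
  -- tangential cone per index
  have htcc : ∀ i, |f i - s i| ≤ η * |f i| := by
    intro i
    have h := hltcc i xk xstar
    rw [hstar i, sub_zero] at h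
    exact h
  have hscalar : ∀ i, ((1-η) * f i^2 ≤ f i * s i ∧ f i * s i ≤ (1+η) * f i^2 ∧
      s i^2 + (1-η^2) * f i^2 ≤ 2*(f i * s i)) := by
    intro i
    have h := htcc i
    have h3 : |f i * (f i - s i)| ≤ η * f i ^ 2 := by
      rw [abs_mul]
      calc |f i| * |f i - s i| ≤ |f i| * (η * |f i|) :=
            mul_le_mul_of_nonneg_left h (abs_nonneg _)
        _ = η * f i ^ 2 := by rw [show |f i| * (η * |f i|) = η * (|f i|^2) by ring, sq_abs]
    have h4 := abs_le.mp h3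
    have h5 : (f i - s i)^2 ≤ η^2 * f i^2 := by
      have h6 := pow_le_pow_left₀ (abs_nonneg _) h 2
      calc (f i - s i)^2 = |f i - s i|^2 := (sq_abs _).symm
        _ ≤ (η * |f i|)^2 := h6
        _ = η^2 * f i^2 := by rw [mul_pow, sq_abs]
    refine ⟨by nlinarith [h4.1, h4.2], by nlinarith [h4.1, h4.2], by nlinarith [h5]⟩
  have hpa : (1-η) * a ≤ p := by
    rw [ha, hp, Finset.mul_sum]
    exact Finset.sum_le_sum fun i _ => (hscalar i).1
  have hpb : p ≤ (1+η) * a := by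
    rw [ha, hp, Finset.mul_sum]
    exact Finset.sum_le_sum fun i _ => (hscalar i).2.1
  have hqp : q + (1-η^2) * a ≤ 2 * p := by
    rw [hq, ha, hp, Finset.mul_sum, Finset.mul_sum, ← Finset.sum_add_distrib]
    exact Finset.sum_le_sum fun i _ => (hscalar i).2.2
  -- g components
  have hsum_apply : ∀ (T : Finset (Fin m)) (w : Fin m → EuclideanSpace ℝ (Fin n)) (j : Fin n),
      (∑ i ∈ T, w i) j = ∑ i ∈ T, w i j := by
    intro T w j
    induction T using Finset.induction with
    | empty => simp
    | insert _ _ h ih => rw [Finset.sum_insert h, Finset.sum_insert h, PiLp.add_apply, ih]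
  have hgj : ∀ j, g j = ∑ i ∈ S, f i * grad i xk j := by
    intro j
    rw [hgdef, hsum_apply]
    exact Finset.sum_congr rfl fun i _ => by rw [PiLp.smul_apply, smul_eq_mul]
  have hp_inner : ∑ j, g j * ev j = p := by
    rw [hp]
    calc ∑ j, g j * ev j = ∑ j, ∑ i ∈ S, f i * grad i xk j * ev j := by
          refine Finset.sum_congr rfl fun j _ => ?_
          rw [hgj j, Finset.sum_mul]
      _ = ∑ i ∈ S, ∑ j, f i * grad i xk j * ev j := Finset.sum_comm
      _ = ∑ i ∈ S, f i * s i := by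
          refine Finset.sum_congr rfl fun i _ => ?_
          rw [hs, Finset.mul_sum]
          exact Finset.sum_congr rfl fun j _ => by ring
  -- positivity
  have hG2E : ‖g‖^2 = G2 := hnormsq g
  have hG2pos : 0 < G2 := by
    rw [← hG2E]
    have : 0 < ‖g‖ := norm_pos_iff.mpr hg
    positivity
  have hapos : 0 < a := by
    rcases (Finset.sum_nonneg fun i _ => sq_nonneg (f i)).lt_or_eq with h | h
    · exact h
    · exfalso
      apply hg
      have hz : ∀ i ∈ S, f i ^ 2 = 0 :=
        (Finset.sum_eq_zero_iff_of_nonneg fun i _ => sq_nonneg (f i)).mp h.symm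
      rw [hgdef]
      refine Finset.sum_eq_zero fun i hi => ?_
      have : f i = 0 := by
        have := hz i hi
        nlinarith [this]
      rw [show F i xk = f i from rfl, this, zero_smul]
  have hnpos : 0 < n := by
    by_contra h
    push_neg at h
    have hn0 : n = 0 := by omega
    apply hg
    have : ‖g‖^2 = 0 := by
      rw [hnormsq g]
      subst hn0
      simp
    have hng : ‖g‖ = 0 := by
      have := sq_eq_zero_iff.mp this
      exact this
    exact norm_eq_zero.mp hng
  obtain ⟨hσm_pos, hσmM, hray_lo, hray_hi⟩ := jacobian_bounds' hnpos J hrank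
  have hσM_pos : 0 < σM := lt_of_lt_of_le hσm_pos hσmM
  -- J action
  have hJapp : ∀ (v : Fin n → ℝ) (i : {i // i ∈ S}), (J *ᵥ v) i = ∑ j, grad i.1 xk j * v j := by
    intro v i
    rw [hJdef]
    simp [Matrix.mulVec, dotProduct]
  -- lower Rayleigh
  have hqE : σm ^ 2 * E ≤ q := by
    have h := hray_lo ev
    calc σm^2 * E = σm^2 * ∑ j, ev j ^2 := by rw [hE]
      _ ≤ ∑ i : {i // i ∈ S}, ((J *ᵥ ev) i)^2 := h
      _ = ∑ i : {i // i ∈ S}, s i.1 ^ 2 := by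
          refine Finset.sum_congr rfl fun i _ => ?_
          rw [hJapp ev i, hs]
      _ = q := by rw [hq]; exact Finset.sum_coe_sort S (fun i => s i ^ 2)
  -- upper bound on G2
  set s' : Fin m → ℝ := fun i => ∑ j, grad i xk j * g j with hs'
  have hG2eq : G2 = ∑ i ∈ S, f i * s' i := by
    rw [hG2]
    calc ∑ j, g j ^2 = ∑ j, (∑ i ∈ S, f i * grad i xk j) * g j := by
          refine Finset.sum_congr rfl fun j _ => ?_
          rw [← hgj j]; ring
      _ = ∑ j, ∑ i ∈ S, f i * grad i xk j * g j := by
          refine Finset.sum_congr rfl fun j _ => ?_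
          rw [Finset.sum_mul]
      _ = ∑ i ∈ S, ∑ j, f i * grad i xk j * g j := Finset.sum_comm
      _ = ∑ i ∈ S, f i * s' i := by
          refine Finset.sum_congr rfl fun i _ => ?_
          rw [hs', Finset.mul_sum]
          exact Finset.sum_congr rfl fun j _ => by ring
  have hup : ∑ i ∈ S, s' i ^ 2 ≤ σM^2 * G2 := by
    have h := hray_hi (fun j => g j)
    calc ∑ i ∈ S, s' i ^2 = ∑ i : {i // i ∈ S}, s' i.1 ^ 2 :=
          (Finset.sum_coe_sort S (fun i => s' i ^ 2)).symm
      _ = ∑ i : {i // i ∈ S}, ((J *ᵥ fun j => g j) i)^2 := by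
          refine Finset.sum_congr rfl fun i _ => ?_
          rw [hJapp (fun j => g j) i, hs']
      _ ≤ σM^2 * ∑ j, (g j)^2 := h
      _ = σM^2 * G2 := by rw [hG2]
  have hG2le : G2 ≤ σM^2 * a := by
    have hcs := Finset.sum_mul_sq_le_sq_mul_sq S f s'
    have h2 : G2^2 ≤ a * (σM^2 * G2) := by
      calc G2^2 = (∑ i ∈ S, f i * s' i)^2 := by rw [hG2eq]
        _ ≤ (∑ i ∈ S, f i ^2) * ∑ i ∈ S, s' i ^2 := hcs
        _ = a * ∑ i ∈ S, s' i ^2 := by rw [ha]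
        _ ≤ a * (σM^2 * G2) := mul_le_mul_of_nonneg_left hup hapos.le
    nlinarith [hG2pos]
  -- expansion of the step
  set t : ℝ := δ * a / ‖g‖^2 with ht
  have hx1 : ∀ j, (xk1 - xstar) j = ev j - t * g j := by
    intro j
    rw [hupd, ht, ha]
    simp [PiLp.sub_apply, PiLp.smul_apply, hev, hf]
    ring
  have hq0 : 0 ≤ q := Finset.sum_nonneg fun i _ => sq_nonneg _
  have hE0 : 0 ≤ E := Finset.sum_nonneg fun j _ => sq_nonneg _
  have hexp : ‖xk1 - xstar‖^2 = E - 2*t*p + t^2 * G2 := by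
    rw [hnormsq (xk1 - xstar)]
    calc ∑ j, ((xk1 - xstar) j)^2 = ∑ j, (ev j - t * g j)^2 := by
          refine Finset.sum_congr rfl fun j _ => ?_
          rw [hx1 j]
      _ = ∑ j, (ev j ^2 - 2*t*(g j * ev j) + t^2 * g j ^2) := by
          refine Finset.sum_congr rfl fun j _ => ?_
          ring
      _ = E - 2*t*(∑ j, g j * ev j) + t^2 * G2 := by
          rw [Finset.sum_add_distrib, Finset.sum_sub_distrib, ← Finset.mul_sum,
            ← Finset.mul_sum, hE, hG2]
      _ = E - 2*t*p + t^2 * G2 := by rw [hp_inner]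
  -- the key polynomial inequality
  have hcpos : 0 < 2*(1-η)*δ - δ^2 := by nlinarith
  have hkey : (2*(1-η)*δ - δ^2) * (σm^2 * E) ≤ (1+η^2) * (2*δ*p - δ^2*a) := by
    have h1 : σm^2 * E ≤ 2*p - (1-η^2)*a := le_trans hqE (by linarith [hqp])
    have h2 : (2*(1-η)*δ - δ^2) * (σm^2 * E) ≤ (2*(1-η)*δ - δ^2) * (2*p - (1-η^2)*a) :=
      mul_le_mul_of_nonneg_left h1 hcpos.le
    refine h2.trans ?_
    have t1 : 0 ≤ ((1+η)*a - p) * (2*(1-η)*δ - δ^2) := mul_nonneg (by linarith) hcpos.le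
    have t2 : 0 ≤ (p - (1-η)*a) * (δ*(2*η*(1+η)+δ)) := by
      apply mul_nonneg (by linarith)
      apply mul_nonneg hδ0.le
      nlinarith
    nlinarith [t1, t2]
  have hnum : 0 ≤ 2*δ*p - δ^2*a := by
    have h1 : 2*δ*((1-η)*a) ≤ 2*δ*p := mul_le_mul_of_nonneg_left hpa (by positivity)
    nlinarith [mul_nonneg hcpos.le hapos.le]
  -- the main comparison of fractions
  have hsuf : (2*(1-η)*δ - δ^2) * σm^2 * E / ((1+η^2) * σM^2) ≤ (2*δ*p - δ^2*a) * a / G2 := by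
    rw [div_le_div_iff₀ (by positivity) hG2pos]
    calc (2*(1-η)*δ - δ^2) * σm^2 * E * G2
        ≤ (2*(1-η)*δ - δ^2) * σm^2 * E * (σM^2 * a) := by
          apply mul_le_mul_of_nonneg_left hG2le
          positivity
      _ = ((2*(1-η)*δ - δ^2) * (σm^2 * E)) * (σM^2 * a) := by ring
      _ ≤ ((1+η^2) * (2*δ*p - δ^2*a)) * (σM^2 * a) := by
          apply mul_le_mul_of_nonneg_right hkey
          positivity
      _ = (2*δ*p - δ^2*a) * a * ((1+η^2) * σM^2) := by ring
  -- put everything together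
  have hEnorm : ‖xk - xstar‖^2 = E := by
    rw [hnormsq (xk - xstar), hE]
    exact Finset.sum_congr rfl fun j _ => by rw [hev, PiLp.sub_apply]
  have hLHS : ‖xk1 - xstar‖^2 = E - (2*δ*p - δ^2*a) * a / G2 := by
    rw [hexp, ht, hG2E]
    field_simp
    ring
  have hRHS : (1 - (2*(1-η)*δ - δ^2) / ((1 + η ^ 2) * kappa J ^ 2)) * ‖xk - xstar‖ ^ 2
      = E - (2*(1-η)*δ - δ^2) * σm^2 * E / ((1+η^2) * σM^2) := by
    rw [hEnorm, kappa, ← hσm, ← hσM]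
    have h1 : σm ≠ 0 := ne_of_gt hσm_pos
    have h2 : σM ≠ 0 := ne_of_gt hσM_pos
    have h3 : (1:ℝ) + η^2 ≠ 0 := by positivity
    field_simp
  rw [hLHS, hRHS]
  linarith [hsuf]
end
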